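/- The Frobenius loss φ: M(d,d) → ℝ, d ≥ 2, is not a proper map: the level set φ⁻¹({1}) is unbounded. -/

import Mathlib

/-- Real cube root. -/
noncomputable def cbrt (x : ℝ) : ℝ :=
  if 0 ≤ x then x ^ ((1:ℝ)/3) else -((-x) ^ ((1:ℝ)/3))

/-- Frobenius loss `φ(W) = ∑_{i,j} ⟨wᵢ,wⱼ⟩³ − 2∑_{i,j} ⟨wᵢ,eⱼ⟩³ + d`. -/
noncomputable def phi (d : ℕ) (W : Fin d → Fin d → ℝ) : ℝ :=
  (∑ i, ∑ j, (∑ k, W i k * W j k) ^ 3) - 2 * ∑ i, ∑ j, (W i j) ^ 3 + d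

/-- The matrix `C₅ₜ(d) = I_{d-2} ⊕ [[(1-t³)^{1/3}, 0],[t, 0]]`. -/
noncomputable def C5 (d : ℕ) (t : ℝ) : Fin d → Fin d → ℝ := fun i j =>
  if (i : ℕ) < d - 2 then (if i = j then 1 else 0)
  else if (i : ℕ) = d - 2 then (if (j : ℕ) = d - 2 then cbrt (1 - t ^ 3) else 0)
  else (if (j : ℕ) = d - 2 then t else 0)


lemma cbrt_cube (x : ℝ) : cbrt x ^ 3 = x := by
  unfold cbrt
  split_ifs with h
  · rw [← Real.rpow_natCast (x ^ ((1:ℝ)/3)) 3, ← Real.rpow_mul h]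
    norm_num
  · push_neg at h
    have h' : (0:ℝ) ≤ -x := by linarith
    rw [neg_pow, ← Real.rpow_natCast ((-x) ^ ((1:ℝ)/3)) 3, ← Real.rpow_mul h']
    norm_num

lemma key (m : ℕ) (t : ℝ) : phi (m+2) (C5 (m+2) t) = 1 := by
  set c := cbrt (1 - t^3) with hcdef
  have hc3 : c^3 = 1 - t^3 := cbrt_cube _
  set W := C5 (m+2) t with hW
  -- row factorization
  set r : Fin (m+2) → ℝ := fun i => if (i:ℕ) < m then 1 else if (i:ℕ) = m then c else t with hr
  set P : Fin (m+2) → Fin (m+2) := fun i => if (i:ℕ) < m then i else ⟨m, by omega⟩ with hP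
  have hrow : ∀ i j, W i j = r i * (if j = P i then 1 else 0) := by
    intro i j
    simp only [hW, C5, hr, hP, Nat.add_sub_cancel]
    rcases lt_trichotomy (i:ℕ) m with h | h | h
    · simp [h, Fin.ext_iff, eq_comm]
    · simp [h, Fin.ext_iff, hcdef]
    · have h1 : ¬ (i:ℕ) < m := by omega
      have h2 : ¬ (i:ℕ) = m := by omega
      simp [h1, h2, Fin.ext_iff]
  -- inner products
  have hG : ∀ i j, (∑ k, W i k * W j k) = r i * r j * (if P i = P j then 1 else 0) := by
    intro i j
    have : ∀ k, W i k * W j k = r i * r j * ((if k = P i then 1 else 0) * (if k = P j then (1:ℝ) else 0)) := by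
      intro k; rw [hrow, hrow]; ring
    rw [Finset.sum_congr rfl (fun k _ => this k), ← Finset.mul_sum]
    congr 1
    simp only [ite_mul, one_mul, zero_mul]
    rw [Finset.sum_ite_eq' Finset.univ (P i) (fun k => if k = P j then (1:ℝ) else 0)]
    simp
  -- first sum
  have hS1 : (∑ i, ∑ j, (∑ k, W i k * W j k) ^ 3)
      = ∑ i, ∑ j, (r i)^3 * (r j)^3 * (if P i = P j then 1 else 0) := by
    refine Finset.sum_congr rfl fun i _ => Finset.sum_congr rfl fun j _ => ?_
    rw [hG]
    by_cases h : P i = P j <;> simp [h] <;> ring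
  have hS2 : (∑ i, ∑ j, (W i j) ^ 3) = ∑ i, (r i)^3 := by
    refine Finset.sum_congr rfl fun i _ => ?_
    have h2 : ∀ j, (W i j)^3 = (r i)^3 * (if j = P i then 1 else 0) := by
      intro j; rw [hrow]; by_cases h : j = P i <;> simp [h]
    rw [Finset.sum_congr rfl fun j _ => h2 j, ← Finset.mul_sum]
    simp
  have hr1 : ∀ i : Fin m, r (i.castSucc.castSucc) = 1 := by
    intro i; simp [hr, i.isLt]
  have hra : r ((Fin.last m).castSucc) = c := by simp [hr]
  have hrb : r (Fin.last (m+1)) = t := by simp [hr]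
  have hPs : ∀ i : Fin m, P (i.castSucc.castSucc) = i.castSucc.castSucc := by
    intro i; simp [hP, i.isLt]
  have hPa : P ((Fin.last m).castSucc) = (Fin.last m).castSucc := by
    simp [hP, Fin.ext_iff]
  have hPb : P (Fin.last (m+1)) = (Fin.last m).castSucc := by
    simp [hP, Fin.ext_iff]
  have hne : ∀ i : Fin m, (i.castSucc.castSucc : Fin (m+2)) ≠ (Fin.last m).castSucc := by
    intro i; simp only [ne_eq, Fin.ext_iff, Fin.coe_castSucc, Fin.val_last]
    exact Nat.ne_of_lt i.isLt
  have hne' : ∀ i : Fin m, (Fin.last m).castSucc ≠ (i.castSucc.castSucc : Fin (m+2)) := by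
    intro i; exact (hne i).symm
  unfold phi
  rw [hS1, hS2]
  simp only [Fin.sum_univ_castSucc, hr1, hra, hrb, hPs, hPa, hPb, hne, hne', if_false,
    Fin.castSucc_inj, one_pow, one_mul, mul_one, mul_zero, if_true,
    Finset.sum_ite_eq, Finset.mem_univ, Finset.sum_const, nsmul_eq_mul, mul_ite, Finset.card_univ, Fintype.card_fin]
  push_cast
  nlinarith [hc3]

theorem stmt2 (d : ℕ) (hd : 2 ≤ d) :
    ¬ Bornology.IsBounded {W : Fin d → Fin d → ℝ | phi d W = 1} := by
  obtain ⟨m, rfl⟩ : ∃ m, d = m + 2 := ⟨d - 2, by omega⟩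
  intro hb
  obtain ⟨C, hC⟩ := isBounded_iff_forall_norm_le.1 hb
  set t : ℝ := max (C + 1) 1 with ht
  have hmem : C5 (m+2) t ∈ {W : Fin (m+2) → Fin (m+2) → ℝ | phi (m+2) W = 1} := key m t
  have h1 := hC _ hmem
  have hentry : C5 (m+2) t (Fin.last (m+1)) ⟨m, by omega⟩ = t := by
    simp [C5]
  have h2 : |t| ≤ ‖C5 (m+2) t‖ := by
    calc |t| = ‖C5 (m+2) t (Fin.last (m+1)) ⟨m, by omega⟩‖ := by rw [hentry]; rfl
    _ ≤ ‖C5 (m+2) t (Fin.last (m+1))‖ := norm_le_pi_norm _ _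
    _ ≤ ‖C5 (m+2) t‖ := norm_le_pi_norm _ _
  have h3 : t ≤ |t| := le_abs_self t
  have h4 : C + 1 ≤ t := le_max_left _ _
  linarith
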